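/- arXiv:cs/0701073 — 2 statements merged into one kernel-verified Lean document; each statement's English description precedes it below -/
import Mathlib

section
/- Let A be an n × m matrix over ℚ and let v be an index with 1 ≤ v ≤ m. Then the following are equivalent: (1) there exists a row vector b ∈ ℚⁿ such that every component of bA is nonnegative and the v-th component of bA is strictly positive; (2) there is no column vector f ∈ ℚᵐ with all components nonnegative, A f = 0, and f_v > 0. -/
open Matrix Finset

lemma farkas_aux : ∀ (m : ℕ) {n : ℕ} (a : Fin m → Fin n → ℚ) (c : Fin n → ℚ),
    (∀ y : Fin n → ℚ, (∀ i, 0 ≤ dotProduct y (a i)) → 0 ≤ dotProduct y c) →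
    ∃ x : Fin m → ℚ, (∀ i, 0 ≤ x i) ∧ ∑ i, x i • a i = c := by
  intro m
  induction m with
  | zero =>
    intro n a c h
    refine ⟨fun _ => 0, fun i => le_rfl, ?_⟩
    have h1 := h (-c) (fun i => i.elim0)
    rw [neg_dotProduct, Left.nonneg_neg_iff] at h1
    have h2 : dotProduct c c = 0 :=
      le_antisymm h1 (Finset.sum_nonneg fun i _ => mul_self_nonneg (c i))
    have := dotProduct_self_eq_zero.mp h2
    simp [this]
  | succ m ih =>
    intro n a c h
    set L := a (Fin.last m) with hL
    by_cases hIH : ∀ y : Fin n → ℚ, (∀ i : Fin m, 0 ≤ dotProduct y (a i.castSucc)) → 0 ≤ dotProduct y c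
    · obtain ⟨x, hx, hsum⟩ := ih (fun i => a i.castSucc) c hIH
      refine ⟨Fin.snoc x 0, ?_, ?_⟩
      · intro i
        refine Fin.lastCases ?_ ?_ i <;> simp [Fin.snoc_castSucc, hx]
      · rw [Fin.sum_univ_castSucc]
        simp [Fin.snoc_castSucc, hsum]
    · push_neg at hIH
      obtain ⟨y, hy, hyc⟩ := hIH
      have hyL : dotProduct y L < 0 := by
        by_contra hge
        push_neg at hge
        exact absurd (h y (fun i => Fin.lastCases hge hy i)) (not_le.mpr hyc)
      set α := dotProduct y L with hα
      have hα0 : α ≠ 0 := ne_of_lt hyL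
      set b : Fin m → Fin n → ℚ := fun i => a i.castSucc - (dotProduct y (a i.castSucc) / α) • L with hb
      set d : Fin n → ℚ := c - (dotProduct y c / α) • L with hd
      have key : ∀ z : Fin n → ℚ, (∀ i, 0 ≤ dotProduct z (b i)) → 0 ≤ dotProduct z d := by
        intro z hz
        set w : Fin n → ℚ := z - (dotProduct z L / α) • y with hw
        have hwcols : ∀ j : Fin (m+1), 0 ≤ dotProduct w (a j) := by
          intro j
          refine Fin.lastCases ?_ ?_ j
          · rw [hw]
            simp only [sub_dotProduct, smul_dotProduct, smul_eq_mul, ← hL, ← hα]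
            rw [div_mul_cancel₀ _ hα0]
            simp
          · intro i
            have := hz i
            rw [hb] at this
            rw [hw]
            simp only [sub_dotProduct, smul_dotProduct, dotProduct_sub, dotProduct_smul,
              smul_eq_mul] at this ⊢
            ring_nf at this ⊢
            linarith
        have := h w hwcols
        rw [hw] at this
        rw [hd]
        simp only [sub_dotProduct, smul_dotProduct, dotProduct_sub, dotProduct_smul,
          smul_eq_mul] at this ⊢
        ring_nf at this ⊢
        linarith
      obtain ⟨x, hx, hsum⟩ := ih b d key
      set t := (dotProduct y c - ∑ i, x i * dotProduct y (a i.castSucc)) / α with ht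
      have ht0 : 0 ≤ t := by
        rw [ht, div_nonneg_iff]
        right
        have : 0 ≤ ∑ i, x i * dotProduct y (a i.castSucc) :=
          Finset.sum_nonneg fun i _ => mul_nonneg (hx i) (hy i)
        constructor <;> linarith
      refine ⟨Fin.snoc x t, ?_, ?_⟩
      · intro i
        refine Fin.lastCases ?_ ?_ i <;> simp [Fin.snoc_castSucc, hx, ht0]
      · rw [Fin.sum_univ_castSucc]
        simp only [Fin.snoc_castSucc, Fin.snoc_last]
        have expand : ∑ i, x i • b i
            = (∑ i, x i • a i.castSucc) - ((∑ i, x i * dotProduct y (a i.castSucc)) / α) • L := by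
          rw [Finset.sum_div]
          simp only [hb, smul_sub, smul_smul, Finset.sum_sub_distrib, ← Finset.sum_smul,
            mul_div_assoc]
        rw [expand, hd] at hsum
        have hco : (∑ i, x i * dotProduct y (a i.castSucc)) / α + t = dotProduct y c / α := by
          rw [ht, ← add_div]
          ring_nf
        have step : (∑ i, x i • a i.castSucc) + t • L
            = ((∑ i, x i • a i.castSucc) - ((∑ i, x i * dotProduct y (a i.castSucc)) / α) • L)
              + ((∑ i, x i * dotProduct y (a i.castSucc)) / α + t) • L := by
          module
        rw [step, hsum, hco]
        module

theorem lp_duality_characterization (n m : ℕ) (A : Matrix (Fin n) (Fin m) ℚ) (v : Fin m) :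
    (∃ b : Fin n → ℚ, (∀ j, 0 ≤ Matrix.vecMul b A j) ∧ 0 < Matrix.vecMul b A v) ↔
    ¬ ∃ f : Fin m → ℚ, (∀ j, 0 ≤ f j) ∧ A.mulVec f = 0 ∧ 0 < f v := by
  constructor
  · rintro ⟨b, hb, hbv⟩ ⟨f, hf, hAf, hfv⟩
    have h0 : dotProduct b (A.mulVec f) = 0 := by rw [hAf, dotProduct_zero]
    rw [Matrix.dotProduct_mulVec] at h0
    have hpos : 0 < dotProduct (Matrix.vecMul b A) f := by
      have hle : Matrix.vecMul b A v * f v ≤ ∑ j, Matrix.vecMul b A j * f j :=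
        Finset.single_le_sum (fun j _ => mul_nonneg (hb j) (hf j)) (Finset.mem_univ v)
      exact lt_of_lt_of_le (mul_pos hbv hfv) hle
    rw [h0] at hpos
    exact lt_irrefl 0 hpos
  · intro h
    by_contra hno
    push_neg at hno
    obtain ⟨x, hx, hsum⟩ :=
      farkas_aux m (fun j k => A k j) (fun k => -(A k v)) (by
        intro y hy
        have h1 : ∀ j, 0 ≤ Matrix.vecMul y A j := by
          intro j
          simpa [Matrix.vecMul, dotProduct] using hy j
        have h2 := hno y h1
        have : Matrix.vecMul y A v = dotProduct y (fun k => A k v) := by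
          simp [Matrix.vecMul, dotProduct]
        rw [this] at h2
        simpa [dotProduct, Finset.sum_neg_distrib, mul_neg] using h2)
    refine h ⟨x + Pi.single v 1, ?_, ?_, ?_⟩
    · intro j
      by_cases hj : j = v
      · subst hj; simp; linarith [hx j]
      · simp [Pi.single_apply, hj, hx j]
    · have hAx : A.mulVec x = fun k => -(A k v) := by
        funext k
        have := congrFun hsum k
        simpa [Matrix.mulVec, dotProduct, mul_comm] using this
      rw [Matrix.mulVec_add, hAx, Matrix.mulVec_single]
      funext k
      simp
    · simp
      linarith [hx v]
end

section
/- Let φ(f) be a Horn clause in big O equations over functions from a set S to a linearly ordered ring R, i.e., a statement of the form (⋀ᵢ qᵢ = O(rᵢ)) → s = O(t), where qᵢ, rᵢ, s, t are pointwise linear combinations involving a function variable f and other function variables. Then φ(f) holds for all functions f : S → R if and only if φ(α) and φ(−α) hold for all nonnegative functions α : S → R. -/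
/-- `f = g + O(h)`: there is `C : R` with `|f x - g x| ≤ C * |h x|` for all `x`. -/
def BigORel {S : Type*} {R : Type*} [Ring R] [LinearOrder R] [IsStrictOrderedRing R] (f g h : S → R) : Prop :=
  ∃ C : R, ∀ x : S, |f x - g x| ≤ C * |h x|

/-- The value at `x` of a pointwise linear combination (with integer coefficients)
of the distinguished function variable `f` and the other function variables `V`. -/
def LinTerm {S : Type*} {R : Type*} [Ring R] [LinearOrder R] [IsStrictOrderedRing R] {ι : Type*} [Fintype ι]
    (c : ℤ) (d : ι → ℤ) (f : S → R) (V : ι → S → R) : S → R :=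
  fun x => c • f x + ∑ j, d j • V j x

/-- The Horn clause `(⋀ i, qᵢ = O(rᵢ)) → s = O(t)`, where each of `qᵢ, rᵢ, s, t`
is a pointwise linear combination of `f` and the other variables `V`. -/
def HornClause {S : Type*} {R : Type*} [Ring R] [LinearOrder R] [IsStrictOrderedRing R] {ι : Type*} [Fintype ι]
    (n : ℕ) (qc rc : Fin n → ℤ) (qd rd : Fin n → ι → ℤ) (sc tc : ℤ) (sd td : ι → ℤ)
    (f : S → R) (V : ι → S → R) : Prop :=
  (∀ i : Fin n, BigORel (LinTerm (qc i) (qd i) f V) 0 (LinTerm (rc i) (rd i) f V)) →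
    BigORel (LinTerm sc sd f V) 0 (LinTerm tc td f V)

theorem horn_clause_sign_split {S : Type*} {R : Type*} [Ring R] [LinearOrder R] [IsStrictOrderedRing R]
    {ι : Type*} [Fintype ι]
    (n : ℕ) (qc rc : Fin n → ℤ) (qd rd : Fin n → ι → ℤ) (sc tc : ℤ) (sd td : ι → ℤ) :
    (∀ (f : S → R) (V : ι → S → R), HornClause n qc rc qd rd sc tc sd td f V) ↔
    (∀ (α : S → R) (V : ι → S → R), (∀ x, 0 ≤ α x) →
      HornClause n qc rc qd rd sc tc sd td α V ∧
      HornClause n qc rc qd rd sc tc sd td (-α) V) := by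
  constructor
  · intro H α V _
    exact ⟨H α V, H (-α) V⟩
  · intro H f V hyp
    classical
    set fP : S → R := fun x => if 0 ≤ f x then f x else 0 with hfP
    set VP : ι → S → R := fun j x => if 0 ≤ f x then V j x else 0 with hVP
    set fQ : S → R := fun x => if 0 ≤ f x then 0 else -f x with hfQ
    set VQ : ι → S → R := fun j x => if 0 ≤ f x then 0 else V j x with hVQ
    have keyP : ∀ (c : ℤ) (d : ι → ℤ) (x : S),
        LinTerm c d fP VP x = if 0 ≤ f x then LinTerm c d f V x else 0 := by
      intro c d x
      by_cases h : 0 ≤ f x <;> simp [LinTerm, hfP, hVP, h]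
    have keyQ : ∀ (c : ℤ) (d : ι → ℤ) (x : S),
        LinTerm c d (-fQ) VQ x = if 0 ≤ f x then 0 else LinTerm c d f V x := by
      intro c d x
      by_cases h : 0 ≤ f x <;> simp [LinTerm, hfQ, hVQ, h]
    have nonnegP : ∀ x, 0 ≤ fP x := by
      intro x; rw [hfP]; dsimp only; split_ifs with h
      · exact h
      · exact le_refl 0
    have nonnegQ : ∀ x, 0 ≤ fQ x := by
      intro x; rw [hfQ]; dsimp only; split_ifs with h
      · exact le_refl 0
      · exact neg_nonneg.mpr (le_of_not_ge h)
    have hypP : ∀ i : Fin n, BigORel (LinTerm (qc i) (qd i) fP VP) 0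
        (LinTerm (rc i) (rd i) fP VP) := by
      intro i
      obtain ⟨C, hC⟩ := hyp i
      refine ⟨C, fun x => ?_⟩
      simp only [Pi.zero_apply, sub_zero, keyP]
      split_ifs with h
      · have := hC x; simpa using this
      · simp
    have hypQ : ∀ i : Fin n, BigORel (LinTerm (qc i) (qd i) (-fQ) VQ) 0
        (LinTerm (rc i) (rd i) (-fQ) VQ) := by
      intro i
      obtain ⟨C, hC⟩ := hyp i
      refine ⟨C, fun x => ?_⟩
      simp only [Pi.zero_apply, sub_zero, keyQ]
      split_ifs with h
      · simp
      · have := hC x; simpa using this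
    obtain ⟨C1, h1⟩ := (H fP VP nonnegP).1 hypP
    obtain ⟨C2, h2⟩ := (H fQ VQ nonnegQ).2 hypQ
    refine ⟨C1 ⊔ C2, fun x => ?_⟩
    simp only [Pi.zero_apply, sub_zero]
    by_cases h : 0 ≤ f x
    · have := h1 x
      simp only [Pi.zero_apply, sub_zero, keyP, if_pos h] at this
      exact this.trans (mul_le_mul_of_nonneg_right le_sup_left (abs_nonneg _))
    · have := h2 x
      simp only [Pi.zero_apply, sub_zero, keyQ, if_neg h] at this
      exact this.trans (mul_le_mul_of_nonneg_right le_sup_right (abs_nonneg _))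
end
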